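/- Let D be a dataset on ground set I, and let K ⊆ D with |K| = ℓ be shattered by the ranges R = {T_D(A) : ∅ ≠ A ⊆ I}. Then every transaction τ ∈ K has length at least ℓ, i.e., |τ| ≥ |K|. -/

import Mathlib

open Finset

def suppSet {α : Type*} [DecidableEq α] (D : Finset (Finset α)) (A : Finset α) :
    Finset (Finset α) :=
  D.filter (fun τ => A ⊆ τ)

def Shattered {α : Type*} [DecidableEq α] (D K : Finset (Finset α)) : Prop :=
  ∀ B ⊆ K, ∃ A : Finset α, A.Nonempty ∧ suppSet D A ∩ K = B

/-- if `K ⊆ D` is shattered by the ranges, every transaction `τ ∈ K`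
has length at least `|K|`. -/
theorem shattered_card_le_length {α : Type*} [DecidableEq α]
    (D K : Finset (Finset α)) (hK : K ⊆ D) (hsh : Shattered D K) :
    ∀ τ ∈ K, K.card ≤ τ.card := by
  intro τ hτ
  classical
  -- the set of subsets of K containing τ
  set S : Finset (Finset (Finset α)) := K.powerset.filter (fun B => τ ∈ B) with hS
  -- witness function
  have hw : ∀ B ∈ S, (K.powerset.filter (fun B => τ ∈ B)).Nonempty → True := fun _ _ _ => trivial
  have hwit : ∀ B ∈ S, ∃ A : Finset α, A.Nonempty ∧ suppSet D A ∩ K = B := by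
    intro B hB
    simp only [hS, mem_filter, mem_powerset] at hB
    exact hsh B hB.1
  choose f hf1 hf2 using hwit
  -- f maps into nonempty subsets of τ
  have hmem : ∀ B (hB : B ∈ S), f B hB ∈ τ.powerset.erase ∅ := by
    intro B hB
    have hτB : τ ∈ B := (mem_filter.mp hB).2
    have : τ ∈ suppSet D (f B hB) ∩ K := by rw [hf2 B hB]; exact hτB
    have hsub : f B hB ⊆ τ := (mem_filter.mp (mem_inter.mp this).1).2
    simp [mem_erase, mem_powerset, hsub, (hf1 B hB).ne_empty]
  -- injectivity
  have hcard : S.card ≤ (τ.powerset.erase ∅).card := by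
    rw [← card_attach (s := S)]
    exact Finset.card_le_card_of_injOn (fun B => f B.1 B.2)
      (fun B _ => hmem B.1 B.2)
      (fun B _ B' _ h => by
        simp only at h
        exact Subtype.ext (by rw [← hf2 B.1 B.2, ← hf2 B'.1 B'.2, h]))
  -- card of S is 2^(|K|-1)
  have hScard : S.card = 2 ^ (K.card - 1) := by
    have hbij : S.card = (K.erase τ).powerset.card := by
      apply Finset.card_nbij' (fun B => B.erase τ) (fun C => insert τ C)
      · intro B hB
        simp only [hS, coe_filter, mem_coe, Set.mem_setOf_eq, mem_filter, mem_powerset] at hB ⊢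
        exact erase_subset_erase τ hB.1
      · intro C hC
        simp only [hS, coe_filter, mem_coe, Set.mem_setOf_eq, mem_filter, mem_powerset, mem_powerset] at hC ⊢
        constructor
        · exact insert_subset hτ (hC.trans (erase_subset τ K))
        · exact mem_insert_self τ C
      · intro B hB
        simp only [hS, coe_filter, mem_coe, Set.mem_setOf_eq, mem_filter] at hB
        exact insert_erase hB.2
      · intro C hC
        simp only [mem_coe, mem_powerset] at hC
        exact erase_insert (fun h => (mem_erase.mp (hC h)).1 rfl)
    rw [hbij, card_powerset, card_erase_of_mem hτ]
  have htcard : (τ.powerset.erase ∅).card = 2 ^ τ.card - 1 := by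
    rw [card_erase_of_mem (by simp), card_powerset]
  rw [hScard, htcard] at hcard
  have h1 : 2 ^ (K.card - 1) < 2 ^ τ.card :=
    lt_of_le_of_lt hcard (Nat.sub_lt (Nat.pow_pos (by norm_num)) one_pos)
  have h2 : K.card - 1 < τ.card := by
    exact (Nat.pow_lt_pow_iff_right (by norm_num)).mp h1
  omega
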